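/- arXiv:1401.0062 — 3 statements merged into one kernel-verified Lean document; each statement's English description precedes it below -/
import Mathlib

section
/- For all real numbers r > 0 and θ > 0, ∑_{w=0}^∞ ((w+r)/(w+1)) · BNB(w; r, 1, θ) = θ(ψ(r+θ) − ψ(θ)). (This is the total acceptance probability, scaled by max{r,1}, of the rejection sampler for the digamma distribution that proposes W ~ BNB(r, 1, θ) and accepts with probability ((W+r)/(W+1))/max{r,1}; consequently the per-trial acceptance probability equals θ[ψ(r+θ) − ψ(θ)]/max{r,1}.) -/
open scoped BigOperators

/-- Rising factorial `(a)_z = a(a+1)⋯(a+z-1)`. -/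
noncomputable def risingFac (a : ℝ) (z : ℕ) : ℝ := ∏ i ∈ Finset.range z, (a + i)

/-- Digamma function `ψ(x) = Γ'(x)/Γ(x)`. -/
noncomputable def psi (x : ℝ) : ℝ := deriv Real.Gamma x / Real.Gamma x

/-- Beta function `B(α,β) = Γ(α)Γ(β)/Γ(α+β)`. -/
noncomputable def betaFn (a b : ℝ) : ℝ := Real.Gamma a * Real.Gamma b / Real.Gamma (a + b)

/-- Probability mass function of the beta negative binomial distribution. -/
noncomputable def BNBpmf (r α β : ℝ) (z : ℕ) : ℝ :=
  (risingFac r z / z.factorial) * (betaFn (z + α) (r + β) / betaFn α β)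

noncomputable def ff (r b : ℝ) (k : ℕ) : ℝ :=
  risingFac r (k+1) / (((k:ℝ)+1) * risingFac b (k+1))

lemma rf_succ (a : ℝ) (z : ℕ) : risingFac a (z+1) = risingFac a z * (a + z) :=
  Finset.prod_range_succ _ _

lemma rf_succ' (a : ℝ) (z : ℕ) : risingFac a (z+1) = a * risingFac (a+1) z := by
  rw [risingFac, Finset.prod_range_succ', risingFac]
  simp only [Nat.cast_zero, add_zero, mul_comm]
  congr 1
  apply Finset.prod_congr rfl
  intro i _
  push_cast
  ring

lemma rf_pos {a : ℝ} (ha : 0 < a) (z : ℕ) : 0 < risingFac a z := by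
  apply Finset.prod_pos
  intro i _
  positivity

lemma rf_mono {a b : ℝ} (ha : 0 < a) (hab : a ≤ b) (z : ℕ) :
    risingFac a z ≤ risingFac b z := by
  apply Finset.prod_le_prod
  · intro i _; positivity
  · intro i _; linarith

lemma Gamma_add_nat {x : ℝ} (hx : 0 < x) (n : ℕ) :
    Real.Gamma (x + n) = risingFac x n * Real.Gamma x := by
  induction n with
  | zero => simp [risingFac]
  | succ n ih =>
    have hxn : (0:ℝ) < x + n := by positivity
    have : x + (n+1 : ℕ) = (x + n) + 1 := by push_cast; ring
    rw [this, Real.Gamma_add_one hxn.ne', ih, rf_succ]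
    ring

lemma gamma_diff {x : ℝ} (hx : 0 < x) : DifferentiableAt ℝ Real.Gamma x := by
  apply Real.differentiableAt_Gamma
  intro m
  have : (0:ℝ) ≤ m := m.cast_nonneg
  intro h; rw [h] at hx; linarith

lemma psi_add_one {x : ℝ} (hx : 0 < x) : psi (x + 1) = psi x + 1 / x := by
  have hΓ := Real.Gamma_pos_of_pos hx
  have hx1 : (0:ℝ) < x + 1 := by linarith
  have h1 : HasDerivAt Real.Gamma (deriv Real.Gamma x) x := (gamma_diff hx).hasDerivAt
  have h2 : HasDerivAt (fun y => Real.Gamma (y + 1)) (deriv Real.Gamma (x+1)) x := by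
    have := ((gamma_diff hx1).hasDerivAt.comp x ((hasDerivAt_id x).add_const 1))
    rw [mul_one] at this
    exact this
  have h3 : HasDerivAt (fun y => y * Real.Gamma y)
      (1 * Real.Gamma x + x * deriv Real.Gamma x) x := (hasDerivAt_id x).mul h1
  have h4 : (fun y : ℝ => y * Real.Gamma y) =ᶠ[nhds x] (fun y => Real.Gamma (y + 1)) := by
    filter_upwards [Ioi_mem_nhds hx] with y hy
    exact (Real.Gamma_add_one (ne_of_gt hy)).symm
  have h5 : HasDerivAt (fun y => y * Real.Gamma y) (deriv Real.Gamma (x+1)) x :=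
    h2.congr_of_eventuallyEq h4
  have h6 : deriv Real.Gamma (x+1) = Real.Gamma x + x * deriv Real.Gamma x := by
    have := h5.unique h3; linarith [this]
  rw [psi, psi, h6, Real.Gamma_add_one hx.ne']
  field_simp
  ring

lemma psi_mono {x y : ℝ} (hx : 0 < x) (hxy : x ≤ y) : psi x ≤ psi y := by
  have hy : 0 < y := lt_of_lt_of_le hx hxy
  have hdiff : ∀ z ∈ Set.Ioi (0:ℝ), DifferentiableAt ℝ (Real.log ∘ Real.Gamma) z := by
    intro z hz
    exact ((gamma_diff hz).log (Real.Gamma_pos_of_pos hz).ne')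
  have hmono := Real.convexOn_log_Gamma.monotoneOn_deriv hdiff
  have hderiv : ∀ z ∈ Set.Ioi (0:ℝ), deriv (Real.log ∘ Real.Gamma) z = psi z := by
    intro z hz
    have : HasDerivAt (Real.log ∘ Real.Gamma)
        (deriv Real.Gamma z / Real.Gamma z) z := by
      exact
        (((gamma_diff hz).hasDerivAt).log (Real.Gamma_pos_of_pos hz).ne')
    exact this.deriv
  have := hmono (Set.mem_Ioi.mpr hx) (Set.mem_Ioi.mpr hy) hxy
  rwa [hderiv x hx, hderiv y hy] at this

lemma psi_add_nat {x : ℝ} (hx : 0 < x) (N : ℕ) :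
    psi (x + N) = psi x + ∑ n ∈ Finset.range N, 1 / (x + n) := by
  induction N with
  | zero => simp
  | succ N ih =>
    have hxN : (0:ℝ) < x + N := by positivity
    have h1 : x + (N+1 : ℕ) = (x + N) + 1 := by push_cast; ring
    rw [h1, psi_add_one hxN, ih, Finset.sum_range_succ]
    ring

lemma psi_tail_tendsto {r θ : ℝ} (hr : 0 < r) (hθ : 0 < θ) :
    Filter.Tendsto (fun N : ℕ => psi (r + θ + N) - psi (θ + N)) Filter.atTop (nhds 0) := by
  have key : ∀ N : ℕ, 0 ≤ psi (r + θ + N) - psi (θ + N) ∧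
      psi (r + θ + N) - psi (θ + N) ≤ (⌈r⌉₊ : ℝ) / (θ + N) := by
    intro N
    have hθN : (0:ℝ) < θ + N := by positivity
    constructor
    · have := psi_mono hθN (show θ + N ≤ r + θ + N by linarith)
      linarith
    · have hle : r ≤ (⌈r⌉₊ : ℝ) := Nat.le_ceil r
      have h1 : psi (r + θ + N) ≤ psi ((θ + N) + (⌈r⌉₊ : ℕ)) := by
        apply psi_mono (by positivity)
        push_cast; linarith
      have h2 : psi ((θ + N) + (⌈r⌉₊ : ℕ)) = psi (θ + N)
          + ∑ n ∈ Finset.range ⌈r⌉₊, 1 / (θ + N + n) := psi_add_nat hθN _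
      have h3 : ∑ n ∈ Finset.range ⌈r⌉₊, 1 / (θ + N + n) ≤ (⌈r⌉₊ : ℝ) / (θ + N) := by
        have : (⌈r⌉₊ : ℝ) / (θ + N) = ∑ _n ∈ Finset.range ⌈r⌉₊, 1 / (θ + N) := by
          rw [Finset.sum_const, Finset.card_range]
          ring
        rw [this]
        apply Finset.sum_le_sum
        intro i _
        apply div_le_div_of_nonneg_left (by norm_num) hθN
        have : (0:ℝ) ≤ i := i.cast_nonneg
        linarith
      linarith
  have hbound : Filter.Tendsto (fun N : ℕ => (⌈r⌉₊ : ℝ) / (θ + N)) Filter.atTop (nhds 0) := by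
    apply Filter.Tendsto.div_atTop tendsto_const_nhds
    apply Filter.tendsto_atTop_add_const_left
    exact tendsto_natCast_atTop_atTop
  exact squeeze_zero (fun N => (key N).1) (fun N => (key N).2) hbound

lemma harmonic_partial_tendsto {r θ : ℝ} (hr : 0 < r) (hθ : 0 < θ) :
    Filter.Tendsto (fun N : ℕ => ∑ n ∈ Finset.range N, r / ((θ + n) * (r + θ + n)))
      Filter.atTop (nhds (psi (r + θ) - psi θ)) := by
  have key : ∀ N : ℕ, ∑ n ∈ Finset.range N, r / ((θ + n) * (r + θ + n))
      = (psi (r + θ) - psi θ) - (psi (r + θ + N) - psi (θ + N)) := by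
    intro N
    have e1 : ∀ n : ℕ, r / ((θ + n) * (r + θ + n)) = 1/(θ+n) - 1/(r+θ+n) := by
      intro n
      have h1 : (0:ℝ) < θ + n := by positivity
      have h2 : (0:ℝ) < r + θ + n := by positivity
      field_simp
      ring
    simp only [e1, Finset.sum_sub_distrib]
    have h4 := psi_add_nat hθ N
    have h5 := psi_add_nat (show (0:ℝ) < r + θ by linarith) N
    linarith
  simp only [key]
  have := (psi_tail_tendsto hr hθ)
  have h2 : Filter.Tendsto (fun _ : ℕ => psi (r + θ) - psi θ) Filter.atTop
      (nhds (psi (r + θ) - psi θ)) := tendsto_const_nhds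
  simpa using h2.sub this

lemma rf_ratio_le {r θ : ℝ} (hr : 0 < r) (hθ : 0 < θ) (k : ℕ) :
    risingFac r k / risingFac (r+θ) k ≤ ((r+θ)/(r+θ+k)) ^ (θ:ℝ) := by
  induction k with
  | zero =>
    simp only [risingFac, Finset.range_zero, Finset.prod_empty, Nat.cast_zero, add_zero]
    rw [div_self (ne_of_gt (show (0:ℝ) < r + θ by positivity)), Real.one_rpow]
    norm_num
  | succ k ih =>
    set c : ℝ := r + θ + k with hc
    have hcpos : 0 < c := by positivity
    have hkey : (r + k) / c ≤ (c / (c+1)) ^ (θ:ℝ) := by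
      have h1 : (r + k) / c ≤ Real.exp (-(θ/c)) := by
        have := Real.add_one_le_exp (-(θ/c))
        have h2 : (r + k)/c = -(θ/c) + 1 := by field_simp; ring
        linarith [this, h2 ▸ le_refl ((r+k)/c)]
      have h3 : (c / (c+1)) ^ (θ:ℝ) = Real.exp (Real.log (c/(c+1)) * θ) :=
        Real.rpow_def_of_pos (by positivity) θ
      rw [h3]
      apply h1.trans
      rw [Real.exp_le_exp]
      have h4 : Real.log ((c+1)/c) ≤ (c+1)/c - 1 :=
        Real.log_le_sub_one_of_pos (by positivity)
      have h5 : Real.log (c/(c+1)) = - Real.log ((c+1)/c) := by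
        rw [← Real.log_inv]
        congr 1
        field_simp
      have h6 : (c+1)/c - 1 = 1/c := by field_simp; ring
      rw [h5]
      have h7 : Real.log ((c+1)/c) ≤ 1/c := by linarith
      have h8 : θ * Real.log ((c+1)/c) ≤ θ * (1/c) := mul_le_mul_of_nonneg_left h7 hθ.le
      have h9 : θ * (1/c) = θ / c := by ring
      nlinarith [h8, h9]
    have hrk : risingFac r (k+1) / risingFac (r+θ) (k+1)
        = (risingFac r k / risingFac (r+θ) k) * ((r+k)/c) := by
      rw [rf_succ, rf_succ]
      have h1 := (rf_pos (show (0:ℝ) < r+θ by positivity) k).ne'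
      have h2 := (rf_pos hr k).ne'
      field_simp
      exact hc
    rw [hrk]
    have hnn1 : (0:ℝ) ≤ risingFac r k / risingFac (r+θ) k :=
      div_nonneg (rf_pos hr k).le (rf_pos (by positivity) k).le
    have hnn2 : (0:ℝ) ≤ (r + (k:ℝ)) / c :=
      div_nonneg (add_nonneg hr.le (Nat.cast_nonneg k)) hcpos.le
    have step := mul_le_mul ih hkey hnn2 (Real.rpow_nonneg (by positivity) θ)
    refine le_trans step (le_of_eq ?_)
    rw [← Real.mul_rpow (by positivity) (by positivity)]
    have hb : (r+θ)/c * (c/(c+1)) = (r+θ)/(r+θ+((k+1:ℕ):ℝ)) := by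
      have h8 : (r+θ)/c * (c/(c+1)) = (r+θ)/(c+1) := by
        rw [div_mul_div_comm, mul_comm (r+θ) c, mul_div_mul_left _ _ hcpos.ne']
      rw [h8]
      congr 1
      push_cast
      rw [hc]
      ring
    rw [hb]

lemma rf_ratio_le' {r θ : ℝ} (hr : 0 < r) (hθ : 0 < θ) (k : ℕ) :
    risingFac r (k+1) / risingFac (r+θ) (k+1)
      ≤ (r+θ) ^ (θ:ℝ) * (((k:ℝ)+1)) ^ (-θ:ℝ) := by
  have h1 := rf_ratio_le hr hθ (k+1)
  apply h1.trans
  have hk1 : (0:ℝ) < (k:ℝ) + 1 := by positivity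
  have h2 : ((r+θ)/(r+θ+((k+1:ℕ):ℝ))) ^ (θ:ℝ) ≤ ((r+θ)/((k:ℝ)+1)) ^ (θ:ℝ) := by
    apply Real.rpow_le_rpow (by positivity) _ hθ.le
    apply div_le_div_of_nonneg_left (by positivity) hk1
    push_cast
    linarith
  apply h2.trans
  rw [Real.div_rpow (by positivity) hk1.le, Real.rpow_neg hk1.le]
  rw [div_eq_mul_inv]

lemma rf_ratio_tendsto {r θ : ℝ} (hr : 0 < r) (hθ : 0 < θ) :
    Filter.Tendsto (fun k : ℕ => risingFac r (k+1) / risingFac (r+θ) (k+1))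
      Filter.atTop (nhds 0) := by
  have hub : Filter.Tendsto (fun k : ℕ => (r+θ) ^ (θ:ℝ) * (((k:ℝ)+1)) ^ (-θ:ℝ))
      Filter.atTop (nhds 0) := by
    have h1 : Filter.Tendsto (fun x : ℝ => x ^ (-θ:ℝ)) Filter.atTop (nhds 0) :=
      tendsto_rpow_neg_atTop hθ
    have h2 : Filter.Tendsto (fun k : ℕ => ((k:ℝ)+1)) Filter.atTop Filter.atTop :=
      Filter.tendsto_atTop_add_const_right _ 1 tendsto_natCast_atTop_atTop
    have := (h1.comp h2).const_mul ((r+θ) ^ (θ:ℝ))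
    simpa [Function.comp, mul_comm] using this
  apply squeeze_zero _ (fun k => rf_ratio_le' hr hθ k) hub
  intro k
  exact div_nonneg (rf_pos hr _).le (rf_pos (by positivity) _).le

lemma telescope_hasSum {r θ b : ℝ} (hr : 0 < r) (hθ : 0 < θ) (hb : r + θ ≤ b) :
    HasSum (fun k : ℕ => risingFac r (k+1) / risingFac b (k+2))
      (r / (b * (b - r))) := by
  have hbpos : 0 < b := by linarith
  have hbr : 0 < b - r := by linarith
  set a : ℕ → ℝ := fun k => risingFac r (k+1) / risingFac b (k+1) with ha
  have hterm : ∀ k : ℕ, risingFac r (k+1) / risingFac b (k+2)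
      = (a k - a (k+1)) / (b - r) := by
    intro k
    have h1 : risingFac r (k+1+1) = risingFac r (k+1) * (r + ((k+1:ℕ):ℝ)) := rf_succ r (k+1)
    have h2 : risingFac b (k+1+1) = risingFac b (k+1) * (b + ((k+1:ℕ):ℝ)) := rf_succ b (k+1)
    have hp1 := (rf_pos hbpos (k+1)).ne'
    have hp3 := (rf_pos hr (k+1)).ne'
    simp only [ha]
    rw [show k+2 = k+1+1 from rfl, h1, h2]
    have hbk : b + ((k+1:ℕ):ℝ) ≠ 0 := by positivity
    field_simp
    ring
  have hpart : ∀ N : ℕ, ∑ k ∈ Finset.range N, risingFac r (k+1) / risingFac b (k+2)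
      = (a 0 - a N) / (b - r) := by
    intro N
    simp only [hterm]
    rw [← Finset.sum_div]
    congr 1
    exact Finset.sum_range_sub' a N
  have ha0 : a 0 = r / b := by
    simp only [ha]
    rw [show (0:ℕ)+1 = 1 from rfl]
    simp [risingFac]
  have haN : Filter.Tendsto a Filter.atTop (nhds 0) := by
    have hle : ∀ N : ℕ, a N ≤ risingFac r (N+1) / risingFac (r+θ) (N+1) := by
      intro N
      exact div_le_div_of_nonneg_left (rf_pos hr _).le (rf_pos (by positivity) _)
        (rf_mono (by positivity) hb _)
    have hnn : ∀ N : ℕ, 0 ≤ a N := fun N =>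
      div_nonneg (rf_pos hr _).le (rf_pos hbpos _).le
    exact squeeze_zero hnn hle (rf_ratio_tendsto hr hθ)
  rw [hasSum_iff_tendsto_nat_of_nonneg
    (fun k => div_nonneg (rf_pos hr _).le (rf_pos hbpos _).le)]
  simp only [hpart]
  have : Filter.Tendsto (fun N : ℕ => (a 0 - a N) / (b-r)) Filter.atTop
      (nhds ((a 0 - 0)/(b-r))) := (tendsto_const_nhds.sub haN).div_const _
  have heq : (a 0 - 0)/(b-r) = r / (b * (b-r)) := by
    rw [sub_zero, ha0]
    field_simp
  rw [heq] at this
  exact this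

lemma ff_nonneg {r b : ℝ} (hr : 0 < r) (hb : 0 < b) (k : ℕ) : 0 ≤ ff r b k := by
  unfold ff
  have h1 := rf_pos hr (k+1)
  have h2 := rf_pos hb (k+1)
  positivity

lemma rf_factor {a b : ℝ} (ha : 0 < a) (hab : a ≤ b) (z : ℕ) :
    (b / a) * risingFac a (z+1) ≤ risingFac b (z+1) := by
  rw [rf_succ' a z, rf_succ' b z]
  have h1 : b / a * (a * risingFac (a+1) z) = b * risingFac (a+1) z := by
    field_simp
  rw [h1]
  exact mul_le_mul_of_nonneg_left (rf_mono (by linarith) (by linarith) z) (by linarith)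

lemma ff_le {r θ b : ℝ} (hr : 0 < r) (hθ : 0 < θ) (hb : r + θ ≤ b) (k : ℕ) :
    ff r b k ≤ ((r+θ)/b) * ff r (r+θ) k := by
  have hrθ : (0:ℝ) < r + θ := by linarith
  have hbpos : (0:ℝ) < b := by linarith
  have hfac := rf_factor hrθ hb k
  have hk1 : (0:ℝ) < (k:ℝ)+1 := by positivity
  have hrf := rf_pos hrθ (k+1)
  have step1 : ff r b k ≤
      risingFac r (k+1) / (((k:ℝ)+1) * ((b/(r+θ)) * risingFac (r+θ) (k+1))) := by
    unfold ff
    apply div_le_div_of_nonneg_left (rf_pos hr _).le (by positivity)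
    exact mul_le_mul_of_nonneg_left hfac hk1.le
  have step2 : risingFac r (k+1) / (((k:ℝ)+1) * ((b/(r+θ)) * risingFac (r+θ) (k+1)))
      = ((r+θ)/b) * ff r (r+θ) k := by
    unfold ff
    field_simp
  rw [step2] at step1
  exact step1

lemma summable_ff0 {r θ : ℝ} (hr : 0 < r) (hθ : 0 < θ) : Summable (ff r (r+θ)) := by
  have hrθ : (0:ℝ) < r + θ := by linarith
  have hbound : ∀ k : ℕ, ff r (r+θ) k
      ≤ (r+θ) ^ (θ:ℝ) * (((k:ℝ)+1)) ^ (-(1+θ):ℝ) := by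
    intro k
    have hk1 : (0:ℝ) < (k:ℝ)+1 := by positivity
    have h1 : ff r (r+θ) k
        = (risingFac r (k+1) / risingFac (r+θ) (k+1)) * (((k:ℝ)+1))⁻¹ := by
      unfold ff
      field_simp
    rw [h1]
    have h2 := rf_ratio_le' hr hθ k
    have h3 : (0:ℝ) ≤ (((k:ℝ)+1)) ^ (-θ:ℝ) := Real.rpow_nonneg hk1.le _
    calc (risingFac r (k+1) / risingFac (r+θ) (k+1)) * (((k:ℝ)+1))⁻¹
        ≤ ((r+θ) ^ (θ:ℝ) * (((k:ℝ)+1)) ^ (-θ:ℝ)) * (((k:ℝ)+1))⁻¹ := by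
          apply mul_le_mul_of_nonneg_right h2 (by positivity)
      _ = (r+θ) ^ (θ:ℝ) * (((k:ℝ)+1)) ^ (-(1+θ):ℝ) := by
          rw [mul_assoc]
          congr 1
          rw [← Real.rpow_neg_one ((k:ℝ)+1), ← Real.rpow_add hk1]
          congr 1
          ring
  have hsum : Summable (fun k : ℕ => (r+θ) ^ (θ:ℝ) * (((k:ℝ)+1)) ^ (-(1+θ):ℝ)) := by
    apply Summable.mul_left
    have h4 : Summable (fun n : ℕ => ((n:ℝ)) ^ (-(1+θ):ℝ)) :=
      Real.summable_nat_rpow.mpr (by linarith)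
    have h5 := (summable_nat_add_iff 1).mpr h4
    apply h5.congr
    intro k
    push_cast
    norm_num
  exact Summable.of_nonneg_of_le (ff_nonneg hr hrθ) hbound hsum

lemma ff_diff {r θ b : ℝ} (hr : 0 < r) (hθ : 0 < θ) (hb : r + θ ≤ b) (k : ℕ) :
    ff r b k - ff r (b+1) k = risingFac r (k+1) / risingFac b (k+2) := by
  have hbpos : (0:ℝ) < b := by linarith
  have h1 : risingFac b (k+2) = b * risingFac (b+1) (k+1) := rf_succ' b (k+1)
  have h2 : risingFac b (k+2) = risingFac b (k+1) * (b + ((k+1:ℕ):ℝ)) := rf_succ b (k+1)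
  have hp1 := (rf_pos hbpos (k+1)).ne'
  have hp2 := (rf_pos (show (0:ℝ) < b+1 by linarith) (k+1)).ne'
  have hk1 : ((k:ℝ)+1) ≠ 0 := by positivity
  have hR2 := (rf_pos hbpos (k+2)).ne'
  have hbk : b + ((k:ℝ)+1) ≠ 0 := by positivity
  have eb : risingFac b (k+1) = risingFac b (k+2) / (b + ((k:ℝ)+1)) := by
    rw [h2]
    push_cast
    field_simp
  have eb' : risingFac (b+1) (k+1) = risingFac b (k+2) / b := by
    rw [h1]
    field_simp
  unfold ff
  rw [eb, eb']
  field_simp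
  ring

lemma summable_ffb {r θ b : ℝ} (hr : 0 < r) (hθ : 0 < θ) (hb : r + θ ≤ b) :
    Summable (ff r b) := by
  have hbpos : (0:ℝ) < b := by linarith
  exact Summable.of_nonneg_of_le (ff_nonneg hr hbpos) (ff_le hr hθ hb)
    ((summable_ff0 hr hθ).mul_left _)

lemma hasSum_ff0 {r θ : ℝ} (hr : 0 < r) (hθ : 0 < θ) :
    HasSum (ff r (r+θ)) (psi (r + θ) - psi θ) := by
  have hrθ : (0:ℝ) < r + θ := by linarith
  have hbN : ∀ N : ℕ, r + θ ≤ r + θ + N := by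
    intro N
    have : (0:ℝ) ≤ N := N.cast_nonneg
    linarith
  have hsumN : ∀ N : ℕ, Summable (ff r (r+θ+N)) := fun N => summable_ffb hr hθ (hbN N)
  set S : ℕ → ℝ := fun N => ∑' k, ff r (r+θ+N) k with hSdef
  have hS : ∀ N : ℕ, HasSum (ff r (r+θ+N)) (S N) := fun N => (hsumN N).hasSum
  have hS0 : HasSum (ff r (r+θ)) (S 0) := by
    have := hS 0
    simpa using this
  have hstep : ∀ N : ℕ, S N = r / ((θ+N) * (r+θ+N)) + S (N+1) := by
    intro N
    have hcast : r + θ + ((N+1:ℕ):ℝ) = (r + θ + N) + 1 := by push_cast; ring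
    have hS1 : HasSum (ff r ((r+θ+N)+1)) (S (N+1)) := by
      have := hS (N+1)
      rwa [hcast] at this
    have hdiff := (hS N).sub hS1
    have hfun : (fun k => ff r (r+θ+N) k - ff r ((r+θ+N)+1) k)
        = fun k => risingFac r (k+1) / risingFac (r+θ+N) (k+2) := by
      funext k
      exact ff_diff hr hθ (hbN N) k
    rw [hfun] at hdiff
    have htel := telescope_hasSum hr hθ (hbN N)
    have huniq := hdiff.unique htel
    have hval : (r+θ+N) - r = θ + N := by ring
    rw [hval] at huniq
    have : r / ((r+θ+N) * (θ+N)) = r / ((θ+N) * (r+θ+N)) := by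
      rw [mul_comm]
    linarith [huniq, this ▸ huniq]
  have hparts : ∀ N : ℕ, S 0
      = (∑ M ∈ Finset.range N, r / ((θ+M) * (r+θ+M))) + S N := by
    intro N
    induction N with
    | zero => simp
    | succ N ih =>
      rw [ih, Finset.sum_range_succ, hstep N]
      ring
  have hSnonneg : ∀ N : ℕ, 0 ≤ S N := by
    intro N
    have hbpos : (0:ℝ) < r+θ+N := by linarith [hbN N]
    exact hasSum_le (fun k => ff_nonneg hr hbpos k) hasSum_zero (hS N)
  have hSle : ∀ N : ℕ, S N ≤ ((r+θ)/(r+θ+N)) * S 0 := by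
    intro N
    exact hasSum_le (fun k => ff_le hr hθ (hbN N) k) (hS N) (hS0.mul_left _)
  have htail : Filter.Tendsto S Filter.atTop (nhds 0) := by
    have hub : Filter.Tendsto (fun N : ℕ => ((r+θ)/(r+θ+N)) * S 0)
        Filter.atTop (nhds 0) := by
      have h1 : Filter.Tendsto (fun N : ℕ => (r+θ)/(r+θ+N)) Filter.atTop (nhds 0) := by
        apply Filter.Tendsto.div_atTop tendsto_const_nhds
        apply Filter.tendsto_atTop_add_const_left
        exact tendsto_natCast_atTop_atTop
      simpa using h1.mul_const (S 0)
    exact squeeze_zero hSnonneg hSle hub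
  have hptend : Filter.Tendsto
      (fun N : ℕ => ∑ M ∈ Finset.range N, r / ((θ+M) * (r+θ+M)))
      Filter.atTop (nhds (S 0)) := by
    have : (fun N : ℕ => ∑ M ∈ Finset.range N, r / ((θ+M) * (r+θ+M)))
        = fun N => S 0 - S N := by
      funext N
      have := hparts N
      linarith
    rw [this]
    simpa using (tendsto_const_nhds.sub htail)
  have := tendsto_nhds_unique hptend (harmonic_partial_tendsto hr hθ)
  rw [← this]
  exact hS0

theorem stmt_3 (r θ : ℝ) (hr : 0 < r) (hθ : 0 < θ) :
    HasSum (fun w : ℕ => (((w : ℝ) + r) / ((w : ℝ) + 1)) * BNBpmf r 1 θ w)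
      (θ * (psi (r + θ) - psi θ)) := by
  have hrθ : (0:ℝ) < r + θ := by linarith
  have hΓrθ := Real.Gamma_pos_of_pos hrθ
  have hΓθ := Real.Gamma_pos_of_pos hθ
  have hterm : ∀ w : ℕ, (((w : ℝ) + r) / ((w : ℝ) + 1)) * BNBpmf r 1 θ w
      = θ * ff r (r+θ) w := by
    intro w
    have hw1 : ((w:ℝ)+1) ≠ 0 := by positivity
    have hfact : ((w.factorial : ℝ)) ≠ 0 := by
      exact_mod_cast w.factorial_ne_zero
    have hrfpos := rf_pos hrθ (w+1)
    have hβ1θ : betaFn 1 θ = 1/θ := by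
      unfold betaFn
      rw [Real.Gamma_one, add_comm, Real.Gamma_add_one hθ.ne']
      field_simp
    have hβw : betaFn ((w:ℝ) + 1) (r+θ)
        = (w.factorial : ℝ) / risingFac (r+θ) (w+1) := by
      unfold betaFn
      have e1 : Real.Gamma ((w:ℝ)+1) = (w.factorial : ℝ) :=
        Real.Gamma_nat_eq_factorial w
      have e2 : (w:ℝ) + 1 + (r+θ) = (r+θ) + ((w+1:ℕ):ℝ) := by push_cast; ring
      rw [e1, e2, Gamma_add_nat hrθ (w+1)]
      field_simp
    unfold BNBpmf
    rw [hβ1θ, hβw]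
    unfold ff
    rw [rf_succ r w]
    field_simp
    ring
  have h := (hasSum_ff0 hr hθ).mul_left θ
  have hfun : (fun w : ℕ => θ * ff r (r+θ) w)
      = fun w : ℕ => (((w : ℝ) + r) / ((w : ℝ) + 1)) * BNBpmf r 1 θ w := by
    funext w
    rw [hterm]
  rwa [hfun] at h
end

section
/- For all real numbers r > 0 and θ > 0, the integral ∫₀¹ (1 − (1−p)^r) · p^{−1}(1−p)^{θ−1} dp is finite and equals ψ(θ+r) − ψ(θ). (This computes the total mass of the measure p ↦ (1−(1−p)^r)·θ·p^{−1}(1−p)^{θ−1} dp arising as the intensity of distinct atoms of a negative binomial process with beta process base measure, and gives the Poisson mean c[ψ(c+r) − ψ(c)]·B̃₀(Ω) in the finitary construction of the beta negative binomial process.) -/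
open MeasureTheory Set

lemma beta_eq_re {a b x : ℝ} (hx0 : 0 ≤ x) (hx1 : x ≤ 1) :
    ((x : ℂ) ^ ((a : ℂ) - 1) * ((1 : ℂ) - (x : ℂ)) ^ ((b : ℂ) - 1))
      = ((x ^ (a - 1) * (1 - x) ^ (b - 1) : ℝ) : ℂ) := by
  have hx1' : (0:ℝ) ≤ 1 - x := by linarith
  rw [show ((1:ℂ) - (x:ℂ)) = ((1 - x : ℝ) : ℂ) by push_cast; ring,
    show ((a:ℂ) - 1) = ((a - 1 : ℝ) : ℂ) by push_cast; ring,
    show ((b:ℂ) - 1) = ((b - 1 : ℝ) : ℂ) by push_cast; ring,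
    ← Complex.ofReal_cpow hx0, ← Complex.ofReal_cpow hx1']
  push_cast
  ring

lemma beta_integrableOn {a b : ℝ} (ha : 0 < a) (hb : 0 < b) :
    IntegrableOn (fun x : ℝ => x ^ (a - 1) * (1 - x) ^ (b - 1)) (Ioo 0 1) := by
  have h := Complex.betaIntegral_convergent (u := (a : ℂ)) (v := (b : ℂ)) (by simpa) (by simpa)
  rw [intervalIntegrable_iff_integrableOn_Ioc_of_le zero_le_one] at h
  have h2 : IntegrableOn (fun x : ℝ =>
      ((x : ℂ) ^ ((a : ℂ) - 1) * ((1 : ℂ) - x) ^ ((b : ℂ) - 1)).re) (Ioc 0 1) := h.re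
  refine ((h2.mono_set Ioo_subset_Ioc_self).congr_fun ?_ measurableSet_Ioo)
  intro x hx
  have := beta_eq_re (a := a) (b := b) hx.1.le hx.2.le
  simp only [this, Complex.ofReal_re]

lemma beta_integral {a b : ℝ} (ha : 0 < a) (hb : 0 < b) :
    ∫ x in Ioo (0:ℝ) 1, x ^ (a - 1) * (1 - x) ^ (b - 1)
      = Real.Gamma a * Real.Gamma b / Real.Gamma (a + b) := by
  have h := Complex.Gamma_mul_Gamma_eq_betaIntegral (s := (a : ℂ)) (t := (b : ℂ))
    (by simpa) (by simpa)
  have hbeta : Complex.betaIntegral a b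
      = ((∫ x in Ioo (0:ℝ) 1, x ^ (a - 1) * (1 - x) ^ (b - 1) : ℝ) : ℂ) := by
    rw [Complex.betaIntegral]
    rw [intervalIntegral.integral_congr (g := fun x : ℝ =>
      ((x ^ (a - 1) * (1 - x) ^ (b - 1) : ℝ) : ℂ)) ?_]
    · rw [intervalIntegral.integral_ofReal, intervalIntegral.integral_of_le zero_le_one,
        integral_Ioc_eq_integral_Ioo]
    · intro x hx
      rw [uIcc_of_le zero_le_one] at hx
      exact beta_eq_re hx.1 hx.2
  rw [hbeta, show ((a:ℂ) + b) = ((a + b : ℝ) : ℂ) by push_cast; ring,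
    Complex.Gamma_ofReal, Complex.Gamma_ofReal, Complex.Gamma_ofReal] at h
  have hne : Real.Gamma (a + b) ≠ 0 := (Real.Gamma_pos_of_pos (by linarith)).ne'
  have h' : Real.Gamma a * Real.Gamma b
      = Real.Gamma (a + b) * ∫ x in Ioo (0:ℝ) 1, x ^ (a - 1) * (1 - x) ^ (b - 1) := by
    exact_mod_cast h
  field_simp
  linarith [h']


lemma one_sub_rpow_le {r p : ℝ} (hr : 0 < r) (hp : 0 < p) (hp1 : p < 1) :
    1 - (1 - p) ^ r ≤ max r 1 * p := by
  have h1p : (0:ℝ) < 1 - p := by linarith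
  rcases le_total 1 r with h | h
  · have := one_add_mul_self_le_rpow_one_add (s := -p) (by linarith) h
    rw [show (1:ℝ) + -p = 1 - p by ring] at this
    have : 1 - (1-p) ^ r ≤ r * p := by nlinarith
    calc 1 - (1-p)^r ≤ r * p := this
      _ ≤ max r 1 * p := by gcongr; exact le_max_left _ _
  · have h2 : (1-p) ^ (1:ℝ) ≤ (1-p) ^ r :=
      Real.rpow_le_rpow_of_exponent_ge h1p (by linarith) h
    rw [Real.rpow_one] at h2
    calc 1 - (1-p)^r ≤ 1 - (1-p) := by linarith
      _ = 1 * p := by ring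
      _ ≤ max r 1 * p := by gcongr; exact le_max_right _ _

lemma contOn (c : ℝ) : ContinuousOn (fun p : ℝ => (1 - p) ^ c) (Ioo (0:ℝ) 1) := by
  apply ContinuousOn.rpow_const
  · exact (continuous_const.sub continuous_id).continuousOn
  · intro x hx
    exact Or.inl (by intro h; rw [sub_eq_zero] at h; exact absurd h.symm hx.2.ne)

lemma gnonneg {r θ p : ℝ} (hr : 0 < r) (hp : 0 < p) (hp1 : p < 1) :
    (1 - p) ^ (θ + r - 1) ≤ (1 - p) ^ (θ - 1) :=
  Real.rpow_le_rpow_of_exponent_ge (by linarith) (by linarith) (by linarith)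

lemma mainIntegrable {r θ : ℝ} (hr : 0 < r) (hθ : 0 < θ) :
    IntegrableOn (fun p : ℝ => p⁻¹ * ((1 - p) ^ (θ - 1) - (1 - p) ^ (θ + r - 1)))
      (Ioo 0 1) := by
  have hb : IntegrableOn (fun x : ℝ => max r 1 * (x ^ ((1:ℝ) - 1) * (1 - x) ^ (θ - 1)))
      (Ioo 0 1) := (beta_integrableOn one_pos hθ).const_mul _
  refine Integrable.mono' hb ?_ ?_
  · refine (ContinuousOn.mul ?_ ((contOn (θ-1)).sub (contOn (θ+r-1)))).aestronglyMeasurable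
      measurableSet_Ioo
    exact ContinuousOn.inv₀ continuousOn_id (fun x hx => hx.1.ne')
  · refine (ae_restrict_iff' measurableSet_Ioo).2 (Filter.Eventually.of_forall ?_)
    intro p hp
    have hp0 := hp.1; have hp1 := hp.2
    have h1p : (0:ℝ) < 1 - p := by linarith
    have hgn : 0 ≤ (1-p) ^ (θ-1) - (1-p) ^ (θ+r-1) :=
      sub_nonneg.2 (gnonneg hr hp0 hp1)
    have hfn : 0 ≤ p⁻¹ * ((1-p) ^ (θ-1) - (1-p) ^ (θ+r-1)) :=
      mul_nonneg (inv_nonneg.2 hp0.le) hgn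
    rw [Real.norm_of_nonneg hfn]
    have hsplit : (1-p) ^ (θ+r-1) = (1-p) ^ (θ-1) * (1-p) ^ r := by
      rw [← Real.rpow_add h1p]; ring_nf
    have key : p⁻¹ * ((1-p) ^ (θ-1) - (1-p) ^ (θ+r-1))
        = (1 - (1-p)^r) * p⁻¹ * (1-p) ^ (θ-1) := by
      rw [hsplit]; ring
    rw [key]
    have h2 : (1 - (1-p)^r) * p⁻¹ ≤ max r 1 := by
      rw [mul_inv_le_iff₀ hp0]
      exact one_sub_rpow_le hr hp0 hp1
    calc (1 - (1-p)^r) * p⁻¹ * (1-p) ^ (θ-1)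
        ≤ max r 1 * (1-p) ^ (θ-1) :=
          mul_le_mul_of_nonneg_right h2 (Real.rpow_nonneg h1p.le _)
      _ = max r 1 * (p ^ ((1:ℝ)-1) * (1-p) ^ (θ-1)) := by
          rw [sub_self, Real.rpow_zero, one_mul]

lemma stepB {r θ s : ℝ} (hr : 0 < r) (hθ : 0 < θ) (hs : 0 < s) :
    ∫ p in Ioo (0:ℝ) 1, p ^ (s - 1) * ((1 - p) ^ (θ - 1) - (1 - p) ^ (θ + r - 1))
      = Real.Gamma s * Real.Gamma θ / Real.Gamma (s + θ)
        - Real.Gamma s * Real.Gamma (θ + r) / Real.Gamma (s + θ + r) := by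
  have h1 := beta_integrableOn hs hθ
  have h2 := beta_integrableOn hs (show (0:ℝ) < θ + r by linarith)
  have : ∀ p : ℝ, p ^ (s - 1) * ((1 - p) ^ (θ - 1) - (1 - p) ^ (θ + r - 1))
      = p ^ (s - 1) * (1 - p) ^ (θ - 1) - p ^ (s - 1) * (1 - p) ^ (θ + r - 1) :=
    fun p => mul_sub _ _ _
  simp only [this]
  rw [integral_sub h1 h2, beta_integral hs hθ, beta_integral hs (by linarith : (0:ℝ) < θ + r)]
  ring_nf

lemma gamma_deriv_aux {c : ℝ} (hc : 0 < c) :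
    HasDerivAt (fun s : ℝ => Real.Gamma c / Real.Gamma (s + c)) (-psi c) 0 := by
  have hne : ∀ m : ℕ, c ≠ -m := by
    intro m
    have : (0:ℝ) ≤ m := Nat.cast_nonneg m
    intro h; rw [h] at hc; linarith
  have hd : HasDerivAt Real.Gamma (deriv Real.Gamma c) c :=
    (Real.differentiableAt_Gamma hne).hasDerivAt
  have hcomp : HasDerivAt (fun s : ℝ => Real.Gamma (s + c)) (deriv Real.Gamma c) 0 :=
    HasDerivAt.comp_add_const 0 c (by rwa [zero_add])
  have hΓpos := Real.Gamma_pos_of_pos hc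
  have hinv : HasDerivAt (fun s : ℝ => (Real.Gamma (s + c))⁻¹)
      (-(deriv Real.Gamma c) / Real.Gamma (0 + c) ^ 2) 0 := by
    refine hcomp.inv ?_
    rw [zero_add]; exact hΓpos.ne'
  have := hinv.const_mul (Real.Gamma c)
  have heq : Real.Gamma c * (-(deriv Real.Gamma c) / Real.Gamma (0 + c) ^ 2) = -psi c := by
    rw [zero_add, psi]
    field_simp
  rw [heq] at this
  exact this.congr_of_eventuallyEq
    (Filter.Eventually.of_forall fun s => div_eq_mul_inv _ _)

open Filter Topology

lemma rhs_tendsto {r θ : ℝ} (hr : 0 < r) (hθ : 0 < θ) :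
    Tendsto (fun s : ℝ => Real.Gamma s * Real.Gamma θ / Real.Gamma (s + θ)
        - Real.Gamma s * Real.Gamma (θ + r) / Real.Gamma (s + θ + r))
      (𝓝[>] 0) (𝓝 (psi (θ + r) - psi θ)) := by
  set f : ℝ → ℝ := fun s => Real.Gamma θ / Real.Gamma (s + θ)
      - Real.Gamma (θ + r) / Real.Gamma (s + (θ + r)) with hf
  have h3 : HasDerivAt f (psi (θ + r) - psi θ) 0 := by
    have h := (gamma_deriv_aux hθ).sub (gamma_deriv_aux (show (0:ℝ) < θ + r by linarith))
    have hval : -psi θ - -psi (θ + r) = psi (θ + r) - psi θ := by ring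
    rwa [hval] at h
  have hslope : Tendsto (slope f 0) (𝓝[>] (0:ℝ)) (𝓝 (psi (θ + r) - psi θ)) :=
    (hasDerivAt_iff_tendsto_slope.mp h3).mono_left
      (nhdsWithin_mono 0 (fun x hx => ne_of_gt hx))
  have hΓ1 : Tendsto (fun s : ℝ => Real.Gamma (s + 1)) (𝓝[>] (0:ℝ)) (𝓝 1) := by
    have hc : ContinuousAt Real.Gamma 1 := by
      refine (Real.differentiableAt_Gamma ?_).continuousAt
      intro m h
      have h2 : (0:ℝ) ≤ m := Nat.cast_nonneg m
      linarith [h, h2]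
    have ht : Tendsto (fun s : ℝ => s + 1) (𝓝 (0:ℝ)) (𝓝 1) := by
      exact (continuous_add_right (1:ℝ)).tendsto' 0 1 (by simp)
    have := hc.tendsto.comp ht
    rw [Real.Gamma_one] at this
    exact this.mono_left nhdsWithin_le_nhds
  have hmul := hΓ1.mul hslope
  rw [one_mul] at hmul
  refine hmul.congr' ?_
  filter_upwards [self_mem_nhdsWithin] with s hs
  have hs0 : (0:ℝ) < s := hs
  have hG1 : Real.Gamma (s + θ) ≠ 0 := (Real.Gamma_pos_of_pos (by linarith)).ne'
  have hG2 : Real.Gamma (s + θ + r) ≠ 0 := (Real.Gamma_pos_of_pos (by linarith)).ne'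
  have hGθ : Real.Gamma θ ≠ 0 := (Real.Gamma_pos_of_pos hθ).ne'
  have hGθr : Real.Gamma (θ + r) ≠ 0 := (Real.Gamma_pos_of_pos (by linarith)).ne'
  have hf0 : f 0 = 0 := by
    simp only [hf, zero_add]
    rw [div_self hGθ, div_self hGθr, sub_self]
  rw [slope_def_field, hf0, sub_zero, sub_zero, Real.Gamma_add_one hs0.ne', hf]
  simp only [← add_assoc]
  field_simp

lemma lhs_tendsto {r θ : ℝ} (hr : 0 < r) (hθ : 0 < θ) :
    Tendsto (fun s : ℝ => ∫ p in Ioo (0:ℝ) 1,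
        p ^ (s - 1) * ((1 - p) ^ (θ - 1) - (1 - p) ^ (θ + r - 1))) (𝓝[>] 0)
      (𝓝 (∫ p in Ioo (0:ℝ) 1, p⁻¹ * ((1 - p) ^ (θ - 1) - (1 - p) ^ (θ + r - 1)))) := by
  refine tendsto_integral_filter_of_dominated_convergence
    (fun p => p⁻¹ * ((1 - p) ^ (θ - 1) - (1 - p) ^ (θ + r - 1))) ?_ ?_ (mainIntegrable hr hθ) ?_
  · refine Filter.Eventually.of_forall fun s => ?_
    refine (ContinuousOn.mul ?_ ((contOn (θ-1)).sub (contOn (θ+r-1)))).aestronglyMeasurable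
      measurableSet_Ioo
    exact ContinuousOn.rpow_const continuousOn_id (fun x hx => Or.inl hx.1.ne')
  · filter_upwards [self_mem_nhdsWithin] with s hs
    refine (ae_restrict_iff' measurableSet_Ioo).2 (Filter.Eventually.of_forall fun p hp => ?_)
    have hp0 := hp.1; have hp1 := hp.2
    have hs0 : (0:ℝ) < s := hs
    have hgn : 0 ≤ (1-p) ^ (θ-1) - (1-p) ^ (θ+r-1) := sub_nonneg.2 (gnonneg hr hp0 hp1)
    have hple : p ^ (s-1) ≤ p⁻¹ := by
      have := Real.rpow_le_rpow_of_exponent_ge hp0 hp1.le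
        (show (-1:ℝ) ≤ s - 1 by linarith)
      rwa [Real.rpow_neg_one] at this
    rw [Real.norm_of_nonneg (mul_nonneg (Real.rpow_nonneg hp0.le _) hgn)]
    exact mul_le_mul_of_nonneg_right hple hgn
  · refine (ae_restrict_iff' measurableSet_Ioo).2 (Filter.Eventually.of_forall fun p hp => ?_)
    have hp0 := hp.1
    have hc : Continuous fun s : ℝ => p ^ (s - 1) := by
      have heq : (fun s : ℝ => p ^ (s-1)) = fun s => Real.exp (Real.log p * (s-1)) := by
        funext s; rw [Real.rpow_def_of_pos hp0]
      rw [heq]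
      exact Real.continuous_exp.comp (continuous_const.mul (continuous_id.sub continuous_const))
    have h0 : Tendsto (fun s : ℝ => p ^ (s-1)) (𝓝 0) (𝓝 p⁻¹) := by
      have := hc.tendsto 0
      rwa [zero_sub, Real.rpow_neg_one] at this
    exact (h0.mono_left nhdsWithin_le_nhds).mul_const _

theorem stmt_7 (r θ : ℝ) (hr : 0 < r) (hθ : 0 < θ) :
    IntegrableOn (fun p : ℝ => (1 - (1 - p) ^ r) * (p⁻¹ * (1 - p) ^ (θ - 1))) (Set.Ioo 0 1) ∧
    ∫ p in Set.Ioo (0 : ℝ) 1, (1 - (1 - p) ^ r) * (p⁻¹ * (1 - p) ^ (θ - 1))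
      = psi (θ + r) - psi θ := by
  have hg : Set.EqOn (fun p : ℝ => (1 - (1 - p) ^ r) * (p⁻¹ * (1 - p) ^ (θ - 1)))
      (fun p => p⁻¹ * ((1 - p) ^ (θ - 1) - (1 - p) ^ (θ + r - 1))) (Ioo 0 1) := by
    intro p hp
    have h1p : (0:ℝ) < 1 - p := by linarith [hp.2]
    have hsplit : (1-p) ^ (θ+r-1) = (1-p) ^ (θ-1) * (1-p) ^ r := by
      rw [← Real.rpow_add h1p]; ring_nf
    simp only [hsplit]; ring
  refine ⟨(mainIntegrable hr hθ).congr_fun hg.symm measurableSet_Ioo, ?_⟩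
  rw [setIntegral_congr_fun measurableSet_Ioo hg]
  have heq : (fun s : ℝ => ∫ p in Ioo (0:ℝ) 1,
        p ^ (s - 1) * ((1 - p) ^ (θ - 1) - (1 - p) ^ (θ + r - 1)))
      =ᶠ[𝓝[>] (0:ℝ)] (fun s => Real.Gamma s * Real.Gamma θ / Real.Gamma (s + θ)
        - Real.Gamma s * Real.Gamma (θ + r) / Real.Gamma (s + θ + r)) := by
    filter_upwards [self_mem_nhdsWithin] with s hs
    exact stepB hr hθ hs
  exact tendsto_nhds_unique ((lhs_tendsto hr hθ).congr' heq) (rhs_tendsto hr hθ)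
end

section
/- For all real numbers r > 0 and c > 1, the series ∑_{z=1}^∞ (r)_z / (r+c)_z converges and equals r/(c−1). Consequently, the mean of the digamma distribution with parameters r and c is ∑_{z=1}^∞ z · digamma(z; r, c) = r / ((c−1)(ψ(r+c) − ψ(c))). -/
open scoped BigOperators

/-- Probability mass function of the digamma distribution (for `z ≥ 1`). -/
noncomputable def digammaPMF (r θ : ℝ) (z : ℕ) : ℝ :=
  (psi (r + θ) - psi θ)⁻¹ * (risingFac r z / (risingFac (r + θ) z * z))

lemma risingFac_pos {a : ℝ} (ha : 0 < a) (n : ℕ) : 0 < risingFac a n :=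
  Finset.prod_pos fun i _ => by positivity

lemma risingFac_succ (a : ℝ) (n : ℕ) :
    risingFac a (n + 1) = risingFac a n * (a + n) := Finset.prod_range_succ _ _

theorem stmt_8 (r c : ℝ) (hr : 0 < r) (hc : 1 < c) :
    HasSum (fun z : ℕ => risingFac r (z + 1) / risingFac (r + c) (z + 1)) (r / (c - 1)) ∧
    HasSum (fun z : ℕ => ((z : ℝ) + 1) * digammaPMF r c (z + 1))
      (r / ((c - 1) * (psi (r + c) - psi c))) := by
  have hc0 : 0 < c := lt_trans one_pos hc
  have hrc : 0 < r + c := by linarith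
  have hc1 : 0 < c - 1 := by linarith
  set u : ℕ → ℝ := fun N => risingFac r (N + 1) / ((c - 1) * risingFac (r + c) N) with hu
  have hRpos : ∀ n, 0 < risingFac r n := risingFac_pos hr
  have hQpos : ∀ n, 0 < risingFac (r + c) n := risingFac_pos hrc
  have hupos : ∀ N, 0 < u N := fun N => div_pos (hRpos _) (mul_pos hc1 (hQpos _))
  have hu0 : u 0 = r / (c - 1) := by
    simp [hu, risingFac]
  have hstep : ∀ z : ℕ, risingFac r (z + 1) / risingFac (r + c) (z + 1) = u z - u (z + 1) := by
    intro z
    have h1 : risingFac (r + c) (z + 1) = risingFac (r + c) z * (r + c + z) :=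
      risingFac_succ _ _
    have h2 : risingFac r (z + 1 + 1) = risingFac r (z + 1) * (r + (z + 1)) := by
      rw [risingFac_succ]; push_cast; ring_nf
    have hQz := (hQpos z).ne'
    have hQz1 := (hQpos (z + 1)).ne'
    have hrcz : (0:ℝ) < r + c + z := by positivity
    rw [hu]
    simp only
    rw [h2, h1]
    field_simp
    ring
  -- the ratio recurrence for u
  have hurec : ∀ N : ℕ, u (N + 1) = u N * ((r + 1 + N) / (r + c + N)) := by
    intro N
    have h1 : risingFac (r + c) (N + 1) = risingFac (r + c) N * (r + c + N) :=
      risingFac_succ _ _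
    have h2 : risingFac r (N + 1 + 1) = risingFac r (N + 1) * (r + 1 + N) := by
      rw [risingFac_succ]; push_cast; ring
    have hQz := (hQpos N).ne'
    have hrcz : (0:ℝ) < r + c + N := by positivity
    rw [hu]
    simp only
    rw [h2, h1]
    field_simp
    try exact Or.inl trivial
  -- upper bound
  set B : ℕ → ℝ := fun N =>
    u 0 * Real.exp (-(c - 1) * (Real.log (r + c + N) - Real.log (r + c))) with hB
  have hub : ∀ N, u N ≤ B N := by
    intro N
    induction N with
    | zero => simp [hB]
    | succ N ih =>
      have hx : (0:ℝ) < r + c + N := by positivity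
      have hfac : (r + 1 + N) / (r + c + N) ≤
          Real.exp (-(c - 1) * (Real.log (r + c + (N + 1)) - Real.log (r + c + N))) := by
        have hlog : Real.log (r + c + (N + 1)) - Real.log (r + c + N) ≤ 1 / (r + c + N) := by
          have h1 : Real.log (r + c + (N + 1)) - Real.log (r + c + N) =
              Real.log ((r + c + (N + 1)) / (r + c + N)) := by
            rw [Real.log_div (by positivity) hx.ne']
          rw [h1]
          have := Real.log_le_sub_one_of_pos
            (show (0:ℝ) < (r + c + (N + 1)) / (r + c + N) by positivity)
          have heq : (r + c + (N + 1)) / (r + c + N) - 1 = 1 / (r + c + N) := by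
            field_simp
            ring
          linarith [this, heq ▸ this]
        have h2 : -(c - 1) * (Real.log (r + c + (N + 1)) - Real.log (r + c + N)) ≥
            -(c - 1) / (r + c + N) := by
          rw [ge_iff_le, neg_div, neg_mul, neg_le_neg_iff]
          calc (c - 1) * (Real.log (r + c + (N + 1)) - Real.log (r + c + N))
              ≤ (c - 1) * (1 / (r + c + N)) := by
                apply mul_le_mul_of_nonneg_left hlog (le_of_lt hc1)
            _ = (c - 1) / (r + c + N) := by ring
        have h3 : (r + 1 + N) / (r + c + N) ≤ Real.exp (-(c - 1) / (r + c + N)) := by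
          have heq : (r + 1 + N) / (r + c + N) = 1 + (-(c - 1) / (r + c + N)) := by
            field_simp
            ring
          rw [heq]
          have := Real.add_one_le_exp (-(c - 1) / (r + c + N))
          linarith
        exact h3.trans (Real.exp_le_exp.mpr h2)
      have hBnn : 0 ≤ B N := by
        have := hupos 0
        positivity
      calc u (N + 1) = u N * ((r + 1 + N) / (r + c + N)) := hurec N
        _ ≤ B N * ((r + 1 + N) / (r + c + N)) := by
            apply mul_le_mul_of_nonneg_right ih (by positivity)
        _ ≤ B N * Real.exp (-(c - 1) * (Real.log (r + c + (N + 1)) - Real.log (r + c + N))) := by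
            apply mul_le_mul_of_nonneg_left hfac hBnn
        _ = B (N + 1) := by
            rw [hB]
            simp only
            rw [mul_assoc, ← Real.exp_add]
            push_cast
            ring_nf
  -- B tends to 0
  have hBtendsto : Filter.Tendsto B Filter.atTop (nhds 0) := by
    have hlogt : Filter.Tendsto
        (fun N : ℕ => Real.log (r + c + N)) Filter.atTop Filter.atTop := by
      apply Real.tendsto_log_atTop.comp
      exact Filter.tendsto_atTop_add_const_left _ _ tendsto_natCast_atTop_atTop
    have hargt : Filter.Tendsto
        (fun N : ℕ => -(c - 1) * (Real.log (r + c + N) - Real.log (r + c)))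
        Filter.atTop Filter.atBot := by
      have h1 : Filter.Tendsto
          (fun N : ℕ => Real.log (r + c + N) - Real.log (r + c))
          Filter.atTop Filter.atTop :=
        Filter.tendsto_atTop_add_const_right _ _ hlogt
      exact Filter.Tendsto.const_mul_atTop_of_neg (by linarith) h1
    have hexp : Filter.Tendsto
        (fun N : ℕ => Real.exp (-(c - 1) * (Real.log (r + c + N) - Real.log (r + c))))
        Filter.atTop (nhds 0) :=
      Real.tendsto_exp_atBot.comp hargt
    have := hexp.const_mul (u 0)
    simpa [hB] using this
  have hutendsto : Filter.Tendsto u Filter.atTop (nhds 0) :=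
    squeeze_zero (fun N => (hupos N).le) hub hBtendsto
  -- first HasSum
  have hnonneg : ∀ z : ℕ, 0 ≤ risingFac r (z + 1) / risingFac (r + c) (z + 1) :=
    fun z => le_of_lt (div_pos (hRpos _) (hQpos _))
  have hsum1 : HasSum (fun z : ℕ => risingFac r (z + 1) / risingFac (r + c) (z + 1))
      (r / (c - 1)) := by
    rw [hasSum_iff_tendsto_nat_of_nonneg hnonneg]
    have hps : ∀ N : ℕ, ∑ z ∈ Finset.range N,
        risingFac r (z + 1) / risingFac (r + c) (z + 1) = u 0 - u N := by
      intro N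
      rw [← Finset.sum_range_sub' u N]
      exact Finset.sum_congr rfl fun z _ => hstep z
    simp only [hps]
    have : Filter.Tendsto (fun N => u 0 - u N) Filter.atTop (nhds (u 0 - 0)) :=
      Filter.Tendsto.sub tendsto_const_nhds hutendsto
    simpa [hu0] using this
  refine ⟨hsum1, ?_⟩
  -- second HasSum
  set K : ℝ := psi (r + c) - psi c with hK
  have heq : (fun z : ℕ => ((z : ℝ) + 1) * digammaPMF r c (z + 1)) =
      fun z : ℕ => K⁻¹ * (risingFac r (z + 1) / risingFac (r + c) (z + 1)) := by
    funext z
    rw [digammaPMF, hK]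
    have hQz := (hQpos (z + 1)).ne'
    have hz1 : ((z : ℝ) + 1) ≠ 0 := by positivity
    push_cast
    generalize (psi (r + c) - psi c)⁻¹ = k
    field_simp
  rw [heq]
  have := hsum1.mul_left K⁻¹
  have hval : K⁻¹ * (r / (c - 1)) = r / ((c - 1) * K) := by
    rw [mul_comm, ← div_eq_mul_inv, div_div]
  rwa [hval] at this
end
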